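/- Let C ⊆ ℕ and define R : ℕ → ℓᵖ by R(2k) = e_{2k} + e_{2k+1} and R(2k+1) = e_{2 c_k}, where {c_k} enumerates C injectively. Let 𝓑 be the closed linear span of ran(R). Then for every k ∈ ℕ: k ∈ C iff e_{2k} ∈ 𝓑 iff e_{2k+1} ∈ 𝓑, and e_{2k} + e_{2k+1} ∈ 𝓑 for all k. -/

import Mathlib

open scoped ENNReal
open Filter

noncomputable section

abbrev ellp (p : ℝ≥0∞) := lp (fun _ : ℕ => ℂ) p

/-- the standard basis vector `e n` -/
noncomputable def stdb (p : ℝ≥0∞) (n : ℕ) : ellp p := lp.single p n 1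

/-- `f` and `g` are disjointly supported -/
def DisjSupp {p : ℝ≥0∞} (f g : ellp p) : Prop := ∀ n : ℕ, f n = 0 ∨ g n = 0

/-- the subvector relation: `f = g · χ_A` for some `A ⊆ ℕ` -/
def Subvec {p : ℝ≥0∞} (f g : ellp p) : Prop :=
  ∃ A : Set ℕ, ⇑f = A.indicator ⇑g

/-- evaluation at coordinate `n` as a continuous linear map -/
noncomputable def evalCLM (p : ℝ≥0∞) [Fact (1 ≤ p)] (n : ℕ) : ellp p →L[ℂ] ℂ :=
  LinearMap.mkContinuous
    { toFun := fun f => f n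
      map_add' := fun f g => congrFun (lp.coeFn_add f g) n
      map_smul' := fun c f => congrFun (lp.coeFn_smul c f) n }
    1 (fun f => by
      simpa using lp.norm_apply_le_norm
        ((zero_lt_one.trans_le (Fact.out : 1 ≤ p)).ne') f n)

theorem evalCLM_apply (p : ℝ≥0∞) [Fact (1 ≤ p)] (n : ℕ) (f : ellp p) :
    evalCLM p n f = f n := rfl

theorem stdb_apply (p : ℝ≥0∞) (n m : ℕ) :
    (stdb p n : ellp p) m = if m = n then 1 else 0 := by
  simp [stdb, lp.single_apply, Pi.single_apply]

/-- membership of basis vectors in the closed linear span of the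
sequence `R` coding the set `C`. -/
theorem stmt_18 (p : ℝ≥0∞) [Fact (1 ≤ p)] (hptop : p ≠ ∞)
    (C : Set ℕ) (c : ℕ → ℕ) (hcinj : Function.Injective c)
    (hcrange : Set.range c = C)
    (R : ℕ → ellp p)
    (hReven : ∀ k, R (2 * k) = stdb p (2 * k) + stdb p (2 * k + 1))
    (hRodd : ∀ k, R (2 * k + 1) = stdb p (2 * c k))
    (B : Submodule ℂ (ellp p))
    (hB : B = (Submodule.span ℂ (Set.range R)).topologicalClosure) :
    ∀ k : ℕ, (k ∈ C ↔ stdb p (2 * k) ∈ B) ∧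
      (k ∈ C ↔ stdb p (2 * k + 1) ∈ B) ∧
      stdb p (2 * k) + stdb p (2 * k + 1) ∈ B := by
  intro k
  have hmemR : ∀ n, R n ∈ B := by
    intro n
    rw [hB]
    exact Submodule.le_topologicalClosure _ (Submodule.subset_span ⟨n, rfl⟩)
  have hsum : stdb p (2 * k) + stdb p (2 * k + 1) ∈ B := by
    rw [← hReven k]; exact hmemR (2 * k)
  -- forward direction: if k ∈ C then e_{2k} ∈ B
  have heven : k ∈ C → stdb p (2 * k) ∈ B := by
    intro hk
    rw [← hcrange] at hk
    obtain ⟨j, hj⟩ := hk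
    rw [← hj, ← hRodd j]
    exact hmemR (2 * j + 1)
  have hodd : k ∈ C → stdb p (2 * k + 1) ∈ B := by
    intro hk
    have := B.sub_mem hsum (heven hk)
    simpa using this
  -- reverse direction using the functional φ = eval(2k) - eval(2k+1)
  have hrev : ∀ (f : ellp p), f (2 * k) - f (2 * k + 1) ≠ 0 → f ∈ B → k ∈ C := by
    intro f hf hfB
    by_contra hk
    set φ : ellp p →L[ℂ] ℂ := evalCLM p (2 * k) - evalCLM p (2 * k + 1) with hφ
    have hker : ∀ n, R n ∈ LinearMap.ker (φ : ellp p →ₗ[ℂ] ℂ) := by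
      intro n
      rcases Nat.even_or_odd n with ⟨j, hj⟩ | ⟨j, hj⟩
      · have hj2 : n = 2 * j := by omega
        rw [LinearMap.mem_ker, hj2, hReven j]
        simp only [hφ, ContinuousLinearMap.coe_coe, ContinuousLinearMap.sub_apply, evalCLM_apply, lp.coeFn_add,
          Pi.add_apply, stdb_apply]
        rcases eq_or_ne j k with rfl | hjk
        · simp
        · have hkj : k ≠ j := Ne.symm hjk
          have h2 : ¬ (2 * k = 2 * j + 1) := by omega
          have h3 : ¬ (2 * k + 1 = 2 * j) := by omega
          simp [h2, h3, hkj]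
      · rw [LinearMap.mem_ker, hj, hRodd j]
        simp only [hφ, ContinuousLinearMap.coe_coe, ContinuousLinearMap.sub_apply, evalCLM_apply, stdb_apply]
        have hck : c j ≠ k := by
          intro h; exact hk (hcrange ▸ ⟨j, h⟩)
        have h1 : ¬ (2 * k = 2 * c j) := by omega
        have h2 : ¬ (2 * k + 1 = 2 * c j) := by omega
        simp [h1, h2]
    have hle : B ≤ LinearMap.ker (φ : ellp p →ₗ[ℂ] ℂ) := by
      rw [hB]
      refine Submodule.topologicalClosure_minimal _ ?_ ?_
      · rw [Submodule.span_le]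
        rintro _ ⟨n, rfl⟩
        exact hker n
      · exact ContinuousLinearMap.isClosed_ker φ
    have := hle hfB
    rw [LinearMap.mem_ker] at this
    have : f (2 * k) - f (2 * k + 1) = 0 := this
    exact hf this
  refine ⟨⟨heven, fun h => hrev _ ?_ h⟩, ⟨hodd, fun h => hrev _ ?_ h⟩, hsum⟩
  · have h1 : (2 * k : ℕ) ≠ 2 * k + 1 := by omega
    rw [stdb_apply, stdb_apply]
    simp [h1]
  · have h1 : (2 * k + 1 : ℕ) ≠ 2 * k := by omega
    rw [stdb_apply, stdb_apply]
    simp [h1]
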